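/- Let (Ω, μ) be a probability space, let X be a Banach space, let k ≥ 1 be an integer and let D ≥ 1. Assume that every subspace E of X with 1 ≤ dim E ≤ k admits a linear isomorphism u from E onto the Euclidean space ℝ^{dim E} (standard Euclidean norm) with ‖u‖·‖u⁻¹‖ ≤ D. Then every subspace F of the Bochner space L²(Ω, μ; X) with 1 ≤ dim F ≤ k admits a linear isomorphism v from F onto the Euclidean space ℝ^{dim F} with ‖v‖·‖v⁻¹‖ ≤ 2D. (In the notation of the paper: d_k(L²(Ω, μ; X)) ≤ 2·d_k(X), where d_k(Y) is the supremum of the Banach–Mazur distances to Euclidean space of the at-most-k-dimensional subspaces of Y. In particular, if X satisfies d_k(X) ≤ C·k^β for all k ≥ 1, then L²(Ω, μ; X) satisfies the same condition with constant 2C.) -/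

import Mathlib

open MeasureTheory Module

set_option maxHeartbeats 1000000
set_option synthInstance.maxHeartbeats 1000000

noncomputable section

/-- Combine finitely many simple functions into a simple function with values in a pi type. -/
def MeasureTheory.SimpleFunc.piFin {Ω X : Type*} [MeasurableSpace Ω] {n : ℕ}
    (φ : Fin n → SimpleFunc Ω X) : SimpleFunc Ω (Fin n → X) where
  toFun := fun ω i => φ i ω
  measurableSet_fiber' := fun c => by
    have : (fun ω i => φ i ω) ⁻¹' {c} = ⋂ i, (φ i) ⁻¹' {c i} := by
      ext ω; simp [funext_iff]
    rw [this]
    exact MeasurableSet.iInter fun i => (φ i).measurableSet_fiber _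
  finite_range' := by
    refine Set.Finite.subset (Set.Finite.pi' fun i => (φ i).finite_range) ?_
    rintro y ⟨ω, rfl⟩
    exact fun i => ⟨ω, rfl⟩

@[simp] lemma MeasureTheory.SimpleFunc.piFin_apply {Ω X : Type*} [MeasurableSpace Ω] {n : ℕ}
    (φ : Fin n → SimpleFunc Ω X) (ω : Ω) (i : Fin n) :
    SimpleFunc.piFin φ ω i = φ i ω := rfl

/-- Normalized isomorphism: sandwich bounds from the Banach-Mazur bound. -/
lemma lemA {X : Type*} [NormedAddCommGroup X] [NormedSpace ℝ X] {k : ℕ} {D : ℝ}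
    (hX : ∀ E : Submodule ℝ X, FiniteDimensional ℝ E →
      1 ≤ Module.finrank ℝ E → Module.finrank ℝ E ≤ k →
      ∃ u : ↥E ≃L[ℝ] EuclideanSpace ℝ (Fin (Module.finrank ℝ E)),
        ‖(u : ↥E →L[ℝ] EuclideanSpace ℝ (Fin (Module.finrank ℝ E)))‖ *
          ‖(u.symm : EuclideanSpace ℝ (Fin (Module.finrank ℝ E)) →L[ℝ] ↥E)‖ ≤ D)
    (E : Submodule ℝ X) (hfd : FiniteDimensional ℝ E) (hle : Module.finrank ℝ E ≤ k) :
    ∃ w : ↥E →L[ℝ] EuclideanSpace ℝ (Fin (Module.finrank ℝ E)),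
      ∀ x : E, ‖x‖ ≤ ‖w x‖ ∧ ‖w x‖ ≤ D * ‖x‖ := by
  by_cases h1 : 1 ≤ Module.finrank ℝ E
  · obtain ⟨u, hu⟩ := hX E hfd h1 hle
    set uc : ↥E →L[ℝ] EuclideanSpace ℝ (Fin (Module.finrank ℝ E)) := (u : ↥E →L[ℝ] EuclideanSpace ℝ (Fin (Module.finrank ℝ E)))
    set us : EuclideanSpace ℝ (Fin (Module.finrank ℝ E)) →L[ℝ] ↥E := (u.symm : EuclideanSpace ℝ (Fin (Module.finrank ℝ E)) →L[ℝ] ↥E)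
    refine ⟨‖us‖ • uc, fun x => ⟨?_, ?_⟩⟩
    · calc ‖x‖ = ‖us (uc x)‖ := by
            simp [us, uc]
        _ ≤ ‖us‖ * ‖uc x‖ := us.le_opNorm _
        _ = ‖(‖us‖ • uc) x‖ := by
            simp [norm_smul, abs_of_nonneg (norm_nonneg us)]
    · calc ‖(‖us‖ • uc) x‖ = ‖us‖ * ‖uc x‖ := by
            simp [norm_smul, abs_of_nonneg (norm_nonneg us)]
        _ ≤ ‖us‖ * (‖uc‖ * ‖x‖) :=
            mul_le_mul_of_nonneg_left (uc.le_opNorm x) (norm_nonneg us)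
        _ = ‖uc‖ * ‖us‖ * ‖x‖ := by ring
        _ ≤ D * ‖x‖ := mul_le_mul_of_nonneg_right hu (norm_nonneg _)
  · refine ⟨0, fun x => ?_⟩
    have h0 : Module.finrank ℝ E = 0 := by omega
    have : Subsingleton E := finrank_zero_iff.mp h0
    have hx : x = 0 := Subsingleton.elim _ _
    simp [hx]

lemma lemB {F H : Type*} [NormedAddCommGroup F] [NormedSpace ℝ F] [FiniteDimensional ℝ F]
    [NormedAddCommGroup H] [InnerProductSpace ℝ H]
    (T : F →ₗ[ℝ] H) (a b : ℝ) (ha : 0 < a) (hb : 0 ≤ b)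
    (hlow : ∀ f, a * ‖f‖ ≤ ‖T f‖) (hup : ∀ f, ‖T f‖ ≤ b * ‖f‖) :
    ∃ v : F ≃L[ℝ] EuclideanSpace ℝ (Fin (Module.finrank ℝ F)),
      ‖(v : F →L[ℝ] EuclideanSpace ℝ (Fin (Module.finrank ℝ F)))‖ *
        ‖(v.symm : EuclideanSpace ℝ (Fin (Module.finrank ℝ F)) →L[ℝ] F)‖ ≤ b / a := by
  have hinj : Function.Injective T := by
    rw [← LinearMap.ker_eq_bot, LinearMap.ker_eq_bot']
    intro f hf
    have h1 := hlow f
    rw [hf, norm_zero] at h1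
    have h2 : ‖f‖ ≤ 0 := by nlinarith [norm_nonneg f]
    exact norm_le_zero_iff.mp h2
  set R := LinearMap.range T with hR
  have : FiniteDimensional ℝ R := inferInstance
  let e₁ : F ≃ₗ[ℝ] R := LinearEquiv.ofInjective T hinj
  have hd : finrank ℝ R = finrank ℝ F := (LinearEquiv.finrank_eq e₁).symm
  let e₂ : R ≃ₗᵢ[ℝ] EuclideanSpace ℝ (Fin (finrank ℝ R)) := (stdOrthonormalBasis ℝ R).repr
  let e₃ : EuclideanSpace ℝ (Fin (finrank ℝ R)) ≃ₗᵢ[ℝ]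
      EuclideanSpace ℝ (Fin (finrank ℝ F)) :=
    LinearIsometryEquiv.piLpCongrLeft 2 ℝ ℝ (finCongr hd)
  let vL : F ≃ₗ[ℝ] EuclideanSpace ℝ (Fin (finrank ℝ F)) :=
    e₁ ≪≫ₗ e₂.toLinearEquiv ≪≫ₗ e₃.toLinearEquiv
  let v : F ≃L[ℝ] EuclideanSpace ℝ (Fin (finrank ℝ F)) := vL.toContinuousLinearEquiv
  have hv : ∀ f, ‖v f‖ = ‖T f‖ := by
    intro f
    show ‖vL f‖ = _
    have h3 : vL f = e₃ (e₂ (e₁ f)) := rfl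
    rw [h3, e₃.norm_map, e₂.norm_map]
    have h4 : e₁ f = ⟨T f, LinearMap.mem_range_self T f⟩ :=
      Subtype.ext (LinearEquiv.ofInjective_apply T f)
    rw [h4]
    rfl
  refine ⟨v, ?_⟩
  have hvn : ‖(v : F →L[ℝ] EuclideanSpace ℝ (Fin (finrank ℝ F)))‖ ≤ b := by
    refine ContinuousLinearMap.opNorm_le_bound _ hb fun f => ?_
    rw [ContinuousLinearEquiv.coe_coe, hv]
    exact hup f
  have hvs : ‖(v.symm : EuclideanSpace ℝ (Fin (finrank ℝ F)) →L[ℝ] F)‖ ≤ a⁻¹ := by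
    refine ContinuousLinearMap.opNorm_le_bound _ (by positivity) fun y => ?_
    rw [ContinuousLinearEquiv.coe_coe]
    have h1 := hlow (v.symm y)
    rw [← hv, v.apply_symm_apply] at h1
    rw [inv_mul_eq_div, le_div_iff₀ ha]
    linarith
  calc ‖(v : F →L[ℝ] EuclideanSpace ℝ (Fin (finrank ℝ F)))‖ *
        ‖(v.symm : EuclideanSpace ℝ (Fin (finrank ℝ F)) →L[ℝ] F)‖
      ≤ b * a⁻¹ := mul_le_mul hvn hvs (norm_nonneg _) hb
    _ = b / a := by rw [div_eq_mul_inv]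

lemma Lp_coeFn_sum {α X' : Type*} [MeasurableSpace α] {μ : Measure α} [NormedAddCommGroup X']
    {p : ENNReal} {ι : Type*} (s : Finset ι) (h : ι → Lp X' p μ) :
    ⇑(∑ i ∈ s, h i) =ᵐ[μ] fun ω => ∑ i ∈ s, h i ω := by
  classical
  induction s using Finset.induction_on with
  | empty =>
    simp only [Finset.sum_empty]
    exact Lp.coeFn_zero X' p μ
  | @insert a s hnot ih =>
    rw [Finset.sum_insert hnot]
    filter_upwards [Lp.coeFn_add (h a) (∑ i ∈ s, h i), ih] with ω h1 h2
    simp only [Finset.sum_insert hnot, h1, Pi.add_apply, h2]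

theorem stmt19 (Ω : Type*) [MeasurableSpace Ω] (μ : Measure Ω) [IsProbabilityMeasure μ]
    (X : Type*) [NormedAddCommGroup X] [NormedSpace ℝ X] [CompleteSpace X]
    (k : ℕ) (hk : 1 ≤ k) (D : ℝ) (hD : 1 ≤ D)
    (hX : ∀ E : Submodule ℝ X, FiniteDimensional ℝ E →
      1 ≤ Module.finrank ℝ E → Module.finrank ℝ E ≤ k →
      ∃ u : ↥E ≃L[ℝ] EuclideanSpace ℝ (Fin (Module.finrank ℝ E)),
        ‖(u : ↥E →L[ℝ] EuclideanSpace ℝ (Fin (Module.finrank ℝ E)))‖ *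
          ‖(u.symm : EuclideanSpace ℝ (Fin (Module.finrank ℝ E)) →L[ℝ] ↥E)‖ ≤ D) :
    ∀ F : Submodule ℝ (Lp X 2 μ), FiniteDimensional ℝ F →
      1 ≤ Module.finrank ℝ F → Module.finrank ℝ F ≤ k →
      ∃ v : ↥F ≃L[ℝ] EuclideanSpace ℝ (Fin (Module.finrank ℝ F)),
        ‖(v : ↥F →L[ℝ] EuclideanSpace ℝ (Fin (Module.finrank ℝ F)))‖ *
          ‖(v.symm : EuclideanSpace ℝ (Fin (Module.finrank ℝ F)) →L[ℝ] ↥F)‖ ≤ 2 * D := by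
  intro F hF hF1 hFk
  classical
  haveI := hF
  set n := Module.finrank ℝ F with hn
  let b : Basis (Fin n) ℝ F := Module.finBasis ℝ F
  let c : Fin n → (↥F →L[ℝ] ℝ) := fun i => LinearMap.toContinuousLinearMap (b.coord i)
  set K : ℝ := ∑ i, ‖c i‖ with hK
  have hK0 : 0 ≤ K := Finset.sum_nonneg fun i _ => norm_nonneg (c i)
  set ε : ℝ := 1 / (3 * (K + 1)) with hε
  have hε0 : 0 < ε := by positivity
  have hKε : K * ε ≤ 1 / 3 := by
    rw [hε]
    rw [mul_one_div, div_le_div_iff₀ (by positivity) (by norm_num)]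
    nlinarith
  have happrox : ∀ i : Fin n, ∃ gi : Lp.simpleFunc X 2 μ,
      ‖((b i : Lp X 2 μ)) - (gi : Lp X 2 μ)‖ ≤ ε := by
    intro i
    have hdr := Lp.simpleFunc.denseRange (E := X) (p := 2) (μ := μ) (by norm_num)
    obtain ⟨gi, hgi⟩ := Metric.denseRange_iff.mp hdr (b i : Lp X 2 μ) ε hε0
    exact ⟨gi, by rw [← dist_eq_norm]; exact hgi.le⟩
  choose g hg using happrox
  let φ : Fin n → SimpleFunc Ω X := fun i => Lp.simpleFunc.toSimpleFunc (g i)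
  have hφ : ∀ i, ((g i : Lp X 2 μ) : Ω → X) =ᵐ[μ] φ i :=
    fun i => (Lp.simpleFunc.toSimpleFunc_eq_toFun (g i)).symm
  let G : SimpleFunc Ω (Fin n → X) := MeasureTheory.SimpleFunc.piFin φ
  let ι := {y // y ∈ G.range}
  let E : ι → Submodule ℝ X := fun y => Submodule.span ℝ (Set.range (y : Fin n → X))
  have hEfd : ∀ y, FiniteDimensional ℝ (E y) :=
    fun y => FiniteDimensional.span_of_finite ℝ (Set.finite_range _)
  have hEk : ∀ y : ι, finrank ℝ (E y) ≤ k := by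
    intro y
    have h1 : finrank ℝ (E y) ≤ n := by
      simpa [Set.finrank] using finrank_range_le_card (R := ℝ) (y : Fin n → X)
    omega
  have hw' := fun y : ι => lemA hX (E y) (hEfd y) (hEk y)
  choose w hwspec using hw'
  let V : ι → (↥F →ₗ[ℝ] X) := fun y => ∑ i, LinearMap.smulRight (b.coord i) ((y : Fin n → X) i)
  let Lf : ↥F → (Fin n → X) → X := fun f y => ∑ i, b.coord i f • y i
  have hV : ∀ (y : ι) (f : ↥F), V y f = Lf f (y : Fin n → X) := by
    intro y f
    simp [V, Lf, LinearMap.sum_apply, LinearMap.smulRight_apply]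
  have hVmem : ∀ (y : ι) (f : ↥F), V y f ∈ E y := by
    intro y f
    rw [hV]
    exact Submodule.sum_mem _ fun i _ =>
      Submodule.smul_mem _ _ (Submodule.subset_span ⟨i, rfl⟩)
  let Vc : ∀ y : ι, ↥F →ₗ[ℝ] ↥(E y) := fun y => (V y).codRestrict (E y) (hVmem y)
  let A : ι → Set Ω := fun y => ⇑G ⁻¹' {(y : Fin n → X)}
  let T : ↥F →ₗ[ℝ] PiLp 2 (fun y : ι => EuclideanSpace ℝ (Fin (finrank ℝ (E y)))) :=
    (WithLp.linearEquiv 2 ℝ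
        (∀ y : ι, EuclideanSpace ℝ (Fin (finrank ℝ (E y))))).symm.toLinearMap ∘ₗ
      LinearMap.pi (fun y : ι =>
        Real.sqrt ((μ (A y)).toReal) • ((w y).toLinearMap ∘ₗ Vc y))
  have hT_apply : ∀ (f : ↥F) (y : ι),
      T f y = Real.sqrt ((μ (A y)).toReal) • (w y) (Vc y f) := fun f y => rfl
  let S : ↥F → Lp X 2 μ := fun f => ∑ i, b.coord i f • (g i : Lp X 2 μ)
  have hS_ae : ∀ f : ↥F, ⇑(S f) =ᵐ[μ] fun ω => Lf f (G ω) := by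
    intro f
    have h2 : ∀ᵐ ω ∂μ, ∀ i : Fin n, ((g i : Lp X 2 μ) : Ω → X) ω = φ i ω := by
      rw [MeasureTheory.ae_all_iff]; exact fun i => hφ i
    have h3 : ∀ᵐ ω ∂μ, ∀ i : Fin n,
        (⇑(b.coord i f • (g i : Lp X 2 μ)) : Ω → X) ω
          = b.coord i f • ((g i : Lp X 2 μ) : Ω → X) ω := by
      rw [MeasureTheory.ae_all_iff]; exact fun i => Lp.coeFn_smul _ _
    filter_upwards [Lp_coeFn_sum Finset.univ (fun i => b.coord i f • (g i : Lp X 2 μ)),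
      h2, h3] with ω h1 h2ω h3ω
    rw [show S f = ∑ i, b.coord i f • (g i : Lp X 2 μ) from rfl, h1]
    calc ∑ i, (⇑(b.coord i f • (g i : Lp X 2 μ))) ω
        = ∑ i, b.coord i f • φ i ω := by
          refine Finset.sum_congr rfl fun i _ => ?_
          rw [h3ω i, h2ω i]
      _ = Lf f (G ω) := rfl
  have hS_norm : ∀ f : ↥F,
      ‖S f‖ ^ 2 = ∑ y : ι, (μ (A y)).toReal * ‖Lf f (y : Fin n → X)‖ ^ 2 := by
    intro f
    rw [Lp.norm_def, eLpNorm_congr_ae (hS_ae f),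
      eLpNorm_eq_lintegral_rpow_enorm_toReal (p := 2) (by norm_num) (by norm_num)]
    simp only [enorm_eq_nnnorm]
    have htr : (2 : ENNReal).toReal = (2:ℝ) := by norm_num
    rw [htr]
    have h4 : ∫⁻ ω, (‖Lf f (G ω)‖₊ : ENNReal) ^ (2:ℝ) ∂μ
        = ∑ z ∈ G.range, (‖Lf f z‖₊ : ENNReal) ^ (2:ℝ) * μ (⇑G ⁻¹' {z}) := by
      have h5 : ∀ ω, ((‖Lf f (G ω)‖₊ : ENNReal) ^ (2:ℝ))
          = (G.map fun z => (‖Lf f z‖₊ : ENNReal) ^ (2:ℝ)) ω := fun ω => by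
        rw [SimpleFunc.coe_map]; rfl
      rw [lintegral_congr h5, SimpleFunc.lintegral_eq_lintegral, SimpleFunc.map_lintegral]
    rw [h4]
    have hfin : ∀ z ∈ G.range, (‖Lf f z‖₊ : ENNReal) ^ (2:ℝ) * μ (⇑G ⁻¹' {z}) ≠ ⊤ :=
      fun z _ => ENNReal.mul_ne_top
        (ENNReal.rpow_ne_top_of_nonneg (by norm_num) ENNReal.coe_ne_top) (measure_ne_top μ _)
    set Z : ENNReal := ∑ z ∈ G.range, (‖Lf f z‖₊ : ENNReal) ^ (2:ℝ) * μ (⇑G ⁻¹' {z}) with hZ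
    have hg1 : (Z ^ (1/2:ℝ)).toReal ^ 2 = Z.toReal := by
      rw [← ENNReal.toReal_rpow, ← Real.rpow_natCast (Z.toReal ^ (1/2:ℝ)) 2,
        ← Real.rpow_mul ENNReal.toReal_nonneg]
      norm_num
    rw [hg1, hZ, ENNReal.toReal_sum hfin, ← Finset.sum_coe_sort G.range]
    refine Finset.sum_congr rfl fun y _ => ?_
    rw [ENNReal.toReal_mul, mul_comm]
    congr 1
    rw [← ENNReal.toReal_rpow]
    rw [ENNReal.coe_toReal, coe_nnnorm]
    rw [show (2:ℝ) = ((2:ℕ):ℝ) by norm_num, Real.rpow_natCast]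
  have hT_norm : ∀ f : ↥F,
      ‖T f‖ ^ 2 = ∑ y : ι, (μ (A y)).toReal * ‖(w y) (Vc y f)‖ ^ 2 := by
    intro f
    rw [PiLp.norm_sq_eq_of_L2]
    refine Finset.sum_congr rfl fun y _ => ?_
    rw [hT_apply f y, norm_smul, Real.norm_eq_abs, abs_of_nonneg (Real.sqrt_nonneg _),
      mul_pow, Real.sq_sqrt ENNReal.toReal_nonneg]
  have hnormVc : ∀ (y : ι) (f : ↥F), ‖Vc y f‖ = ‖Lf f (y : Fin n → X)‖ := by
    intro y f
    have : ‖Vc y f‖ = ‖V y f‖ := rfl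
    rw [this, hV]
  have hTlow : ∀ f : ↥F, ‖S f‖ ≤ ‖T f‖ := by
    intro f
    have h2 : ‖S f‖^2 ≤ ‖T f‖^2 := by
      rw [hS_norm, hT_norm]
      refine Finset.sum_le_sum fun y _ => ?_
      refine mul_le_mul_of_nonneg_left ?_ ENNReal.toReal_nonneg
      have h3 := (hwspec y (Vc y f)).1
      rw [hnormVc] at h3
      exact pow_le_pow_left₀ (norm_nonneg _) h3 2
    nlinarith [norm_nonneg (S f), norm_nonneg (T f)]
  have hD0 : (0:ℝ) ≤ D := by linarith
  have hTup : ∀ f : ↥F, ‖T f‖ ≤ D * ‖S f‖ := by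
    intro f
    have h2 : ‖T f‖^2 ≤ (D * ‖S f‖)^2 := by
      rw [hT_norm, mul_pow, hS_norm, Finset.mul_sum]
      refine Finset.sum_le_sum fun y _ => ?_
      have h3 := (hwspec y (Vc y f)).2
      rw [hnormVc] at h3
      have h4 : ‖(w y) (Vc y f)‖ ^ 2 ≤ D^2 * ‖Lf f (y : Fin n → X)‖^2 := by
        nlinarith [norm_nonneg ((w y) (Vc y f)), norm_nonneg (Lf f (y : Fin n → X))]
      calc (μ (A y)).toReal * ‖(w y) (Vc y f)‖ ^ 2
          ≤ (μ (A y)).toReal * (D^2 * ‖Lf f (y : Fin n → X)‖^2) :=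
            mul_le_mul_of_nonneg_left h4 ENNReal.toReal_nonneg
        _ = D^2 * ((μ (A y)).toReal * ‖Lf f (y : Fin n → X)‖^2) := by ring
    nlinarith [norm_nonneg (T f), norm_nonneg (S f), mul_nonneg hD0 (norm_nonneg (S f))]
  have hS_close : ∀ f : ↥F, ‖S f - (f : Lp X 2 μ)‖ ≤ 1/3 * ‖f‖ := by
    intro f
    have h0 : f = ∑ i, b.coord i f • b i := by
      simp only [Basis.coord_apply]
      exact (b.sum_repr f).symm
    have hrepr : (f : Lp X 2 μ) = ∑ i, b.coord i f • ((b i : Lp X 2 μ)) := by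
      calc (f : Lp X 2 μ) = F.subtype f := rfl
        _ = F.subtype (∑ i, b.coord i f • b i) := by rw [← h0]
        _ = ∑ i, b.coord i f • (b i : Lp X 2 μ) := by
          rw [map_sum]
          exact Finset.sum_congr rfl fun i _ => by rw [_root_.map_smul]; rfl
    have hdiff : S f - (f : Lp X 2 μ)
        = ∑ i, b.coord i f • ((g i : Lp X 2 μ) - (b i : Lp X 2 μ)) := by
      rw [hrepr, show S f = ∑ i, b.coord i f • (g i : Lp X 2 μ) from rfl,
        ← Finset.sum_sub_distrib]
      exact Finset.sum_congr rfl fun i _ => (smul_sub _ _ _).symm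
    calc ‖S f - (f : Lp X 2 μ)‖
        = ‖∑ i, b.coord i f • ((g i : Lp X 2 μ) - (b i : Lp X 2 μ))‖ := by rw [hdiff]
      _ ≤ ∑ i, ‖b.coord i f • ((g i : Lp X 2 μ) - (b i : Lp X 2 μ))‖ := norm_sum_le _ _
      _ ≤ ∑ i, (‖c i‖ * ‖f‖) * ε := by
          refine Finset.sum_le_sum fun i _ => ?_
          rw [norm_smul, Real.norm_eq_abs]
          have h5 : |b.coord i f| ≤ ‖c i‖ * ‖f‖ := by
            have h6 := (c i).le_opNorm f
            have h7 : c i f = b.coord i f := rfl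
            rw [h7] at h6
            simpa using h6
          have h6 : ‖(g i : Lp X 2 μ) - (b i : Lp X 2 μ)‖ ≤ ε := by
            rw [norm_sub_rev]; exact hg i
          exact mul_le_mul h5 h6 (norm_nonneg _) (by positivity)
      _ = K * ε * ‖f‖ := by
          rw [hK, ← Finset.sum_mul, ← Finset.sum_mul]; ring
      _ ≤ 1/3 * ‖f‖ := mul_le_mul_of_nonneg_right hKε (norm_nonneg f)
  have hcoe : ∀ f : ↥F, ‖(f : Lp X 2 μ)‖ = ‖f‖ := fun f => rfl
  have hlow : ∀ f : ↥F, (2/3) * ‖f‖ ≤ ‖T f‖ := by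
    intro f
    have h1 : ‖(f : Lp X 2 μ)‖ ≤ ‖S f‖ + ‖S f - (f : Lp X 2 μ)‖ := by
      have he : (f : Lp X 2 μ) = S f - (S f - (f : Lp X 2 μ)) := by abel
      have h1' := norm_sub_le (S f) (S f - (f : Lp X 2 μ))
      rw [← he] at h1'
      exact h1'
    have h2 := hS_close f
    have h3 := hTlow f
    rw [hcoe] at h1
    linarith
  have hup : ∀ f : ↥F, ‖T f‖ ≤ (4/3 * D) * ‖f‖ := by
    intro f
    have h1 : ‖S f‖ ≤ ‖(f : Lp X 2 μ)‖ + ‖S f - (f : Lp X 2 μ)‖ := by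
      have he := norm_add_le (S f - (f : Lp X 2 μ)) (f : Lp X 2 μ)
      rw [sub_add_cancel] at he
      linarith
    have h2 := hS_close f
    have h3 := hTup f
    rw [hcoe] at h1
    have h4 : ‖S f‖ ≤ 4/3 * ‖f‖ := by linarith
    calc ‖T f‖ ≤ D * ‖S f‖ := h3
      _ ≤ D * (4/3 * ‖f‖) := mul_le_mul_of_nonneg_left h4 hD0
      _ = (4/3 * D) * ‖f‖ := by ring
  obtain ⟨v, hv⟩ := lemB T (2/3) (4/3 * D) (by norm_num) (by linarith) hlow hup
  refine ⟨v, ?_⟩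
  have heq : (4/3 * D) / (2/3) = 2 * D := by ring
  rw [heq] at hv
  exact hv
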